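/- Let A, B be real symmetric n×n matrices with B nonsingular, and suppose A, B are not SDC. If A ⪰ 0 then {μ ∈ ℝ : A + μB ⪰ 0} = {0}. -/

import Mathlib

open Matrix

/-- For symmetric A, B with B nonsingular, not SDC, and A ⪰ 0: {μ : A + μB ⪰ 0} = {0}. -/
theorem not_sdc_psd_set_eq_zero {n : ℕ}
    (A B : Matrix (Fin n) (Fin n) ℝ) (hA : A.IsSymm) (hB : B.IsSymm)
    (hBinv : IsUnit B.det)
    (hnsdc : ¬ ∃ P : Matrix (Fin n) (Fin n) ℝ, IsUnit P.det ∧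
      (Pᵀ * A * P).IsDiag ∧ (Pᵀ * B * P).IsDiag)
    (hApsd : A.PosSemidef) :
    {μ : ℝ | (A + μ • B).PosSemidef} = {0} := by
  ext μ
  simp only [Set.mem_setOf_eq, Set.mem_singleton_iff]
  constructor
  · intro hC
    by_contra hμ
    apply hnsdc
    have hBunit : IsUnit B := (Matrix.isUnit_iff_isUnit_det B).mpr hBinv
    set C := A + μ • B with hCdef
    set D := A + C with hDdef
    have hDpd : D.PosDef := by
      refine posDef_iff_dotProduct_mulVec.mpr ⟨hApsd.1.add hC.1, fun x hx => ?_⟩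
      have h1 := hApsd.dotProduct_mulVec_nonneg x
      have h2 := hC.dotProduct_mulVec_nonneg x
      have heq : star x ⬝ᵥ D *ᵥ x = star x ⬝ᵥ A *ᵥ x + star x ⬝ᵥ C *ᵥ x := by
        simp [hDdef, add_mulVec, dotProduct_add]
      rw [heq]
      rcases lt_or_eq_of_le h1 with h1' | h1'
      · linarith
      rcases lt_or_eq_of_le h2 with h2' | h2'
      · linarith
      exfalso
      have hAx : A *ᵥ x = 0 := (hApsd.dotProduct_mulVec_zero_iff x).mp h1'.symm
      have hCx : C *ᵥ x = 0 := (hC.dotProduct_mulVec_zero_iff x).mp h2'.symm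
      have hBx : B *ᵥ x = 0 := by
        have h3 : μ • (B *ᵥ x) = 0 := by
          have : C *ᵥ x = A *ᵥ x + μ • (B *ᵥ x) := by
            simp [hCdef, add_mulVec, smul_mulVec]
          rw [hCx, hAx, zero_add] at this
          exact this.symm
        rcases smul_eq_zero.mp h3 with h | h
        · exact absurd h hμ
        · exact h
      exact hx (Matrix.mulVec_injective_iff_isUnit.mpr hBunit
        (by simpa using hBx : B *ᵥ x = B *ᵥ 0))
    open scoped MatrixOrder in
    set S := CFC.sqrt D with hSdef
    open scoped MatrixOrder in
    have hSS : S * S = D := CFC.sqrt_mul_sqrt_self D (Matrix.nonneg_iff_posSemidef.mpr hDpd.posSemidef)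
    open scoped MatrixOrder in
    have hSherm : S.IsHermitian := (Matrix.nonneg_iff_posSemidef.mp (CFC.sqrt_nonneg D)).1
    have hSdet : IsUnit S.det := by
      have hdd : S.det * S.det = D.det := by rw [← det_mul, hSS]
      have : D.det ≠ 0 := hDpd.det_pos.ne'
      refine isUnit_iff_ne_zero.mpr fun h => this ?_
      rw [← hdd, h, mul_zero]
    have hSinvS : S⁻¹ * S = 1 := nonsing_inv_mul S hSdet
    have hSSinv : S * S⁻¹ = 1 := mul_nonsing_inv S hSdet
    have hSinvherm : (S⁻¹).IsHermitian := hSherm.inv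
    -- A' = S⁻¹ A S⁻¹ is PSD
    have hA'psd : (S⁻¹ * A * S⁻¹).PosSemidef := by
      have := hApsd.mul_mul_conjTranspose_same S⁻¹
      rwa [hSinvherm.eq] at this
    have hherm := hA'psd.1
    set U : Matrix (Fin n) (Fin n) ℝ := (hherm.eigenvectorUnitary : Matrix (Fin n) (Fin n) ℝ) with hUdef
    set E : Matrix (Fin n) (Fin n) ℝ :=
      diagonal (RCLike.ofReal ∘ hherm.eigenvalues) with hEdef
    have hspec : S⁻¹ * A * S⁻¹ = U * E * star U := hherm.spectral_theorem
    have hUUs : U * star U = 1 := mem_unitaryGroup_iff.mp hherm.eigenvectorUnitary.2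
    have hUsU : star U * U = 1 := mem_unitaryGroup_iff'.mp hherm.eigenvectorUnitary.2
    have hdiagA : star U * (S⁻¹ * A * S⁻¹) * U = E := by
      rw [hspec]
      simp only [← mul_assoc]
      rw [hUsU, one_mul, mul_assoc, hUsU, mul_one]
    have hDcong : S⁻¹ * D * S⁻¹ = 1 := by
      rw [← hSS, ← mul_assoc, mul_assoc S⁻¹ S S, ← mul_assoc S⁻¹ S, hSinvS, one_mul, hSSinv]
    refine ⟨S⁻¹ * U, ?_, ?_, ?_⟩
    · rw [det_mul]
      exact (((Matrix.isUnit_nonsing_inv_det_iff).mpr hSdet)).mul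
        (isUnit_det_of_right_inverse hUUs)
    · have hT : (S⁻¹ * U)ᵀ = star U * S⁻¹ := by
        rw [transpose_mul, ← conjTranspose_eq_transpose_of_trivial,
          ← conjTranspose_eq_transpose_of_trivial, hSinvherm.eq, Matrix.star_eq_conjTranspose]
      rw [hT]
      have : star U * S⁻¹ * A * (S⁻¹ * U) = star U * (S⁻¹ * A * S⁻¹) * U := by
        simp only [mul_assoc]
      rw [this, hdiagA]
      exact isDiag_diagonal _
    · have hT : (S⁻¹ * U)ᵀ = star U * S⁻¹ := by
        rw [transpose_mul, ← conjTranspose_eq_transpose_of_trivial,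
          ← conjTranspose_eq_transpose_of_trivial, hSinvherm.eq, Matrix.star_eq_conjTranspose]
      rw [hT]
      have hBexpr : B = μ⁻¹ • (D - A - A) := by
        have h1 : D - A - A = μ • B := by
          rw [hDdef, hCdef]; abel
        rw [h1, smul_smul, inv_mul_cancel₀ hμ, one_smul]
      have hcong : star U * S⁻¹ * B * (S⁻¹ * U)
          = μ⁻¹ • ((1 : Matrix (Fin n) (Fin n) ℝ) - E - E) := by
        rw [hBexpr]
        have expand : star U * S⁻¹ * (μ⁻¹ • (D - A - A)) * (S⁻¹ * U)
            = μ⁻¹ • (star U * (S⁻¹ * D * S⁻¹) * U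
              - star U * (S⁻¹ * A * S⁻¹) * U - star U * (S⁻¹ * A * S⁻¹) * U) := by
          simp only [Matrix.mul_smul, Matrix.smul_mul, Matrix.mul_sub, Matrix.sub_mul,
            mul_assoc]
        rw [expand, hDcong, hdiagA, mul_one, hUsU]
      rw [hcong]
      exact ((Matrix.isDiag_one.sub (isDiag_diagonal _)).sub (isDiag_diagonal _)).smul μ⁻¹
  · rintro rfl
    simpa using hApsd
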